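/- Soundness of robust semantics for the until operator: if ρ^{φ1 U_{[t1,t2]} φ2}(y,t) > 0 and robust soundness holds for φ1 and φ2 (i.e., positive robustness implies Boolean satisfaction), then there exists t' ∈ [t1,t2] such that y ⊨_{t'} φ2 and for all t'' ∈ [t,t'], y ⊨_{t''} φ1. -/
import Mathlib


/-- Robust semantics of until: max over t' ∈ [t1,t2] of
min(b(t'), min over t'' ∈ [t,t'] of a(t'')). -/
noncomputable def untilRob (a b : ℕ → ℝ) (t1 t2 t : ℕ) : ℝ :=
  sSup ((fun t' => min (b t') (sInf (a '' Set.Icc t t'))) '' Set.Icc t1 t2)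

/-- soundness of robust semantics for until. If the until robustness is
positive and positive robustness implies Boolean satisfaction for φ1 and φ2, then
∃ t' ∈ [t1,t2] with y ⊨_{t'} φ2 and ∀ t'' ∈ [t,t'], y ⊨_{t''} φ1. -/
theorem until_sound (a b : ℕ → ℝ) (holds1 holds2 : ℕ → Prop) (t t1 t2 : ℕ)
    (ht : t ≤ t1) (h12 : t1 ≤ t2)
    (hsound1 : ∀ s, 0 < a s → holds1 s)
    (hsound2 : ∀ s, 0 < b s → holds2 s)
    (h : 0 < untilRob a b t1 t2 t) :
    ∃ t' ∈ Set.Icc t1 t2, holds2 t' ∧ ∀ t'' ∈ Set.Icc t t', holds1 t'' := by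
  have hfin : ((fun t' => min (b t') (sInf (a '' Set.Icc t t'))) '' Set.Icc t1 t2).Finite :=
    (Set.finite_Icc t1 t2).image _
  have hne : ((fun t' => min (b t') (sInf (a '' Set.Icc t t'))) '' Set.Icc t1 t2).Nonempty :=
    (Set.nonempty_Icc.2 h12).image _
  have hmem := hne.csSup_mem hfin
  obtain ⟨t', ht', heq⟩ := hmem
  rw [untilRob] at h
  rw [← heq] at h
  simp only at h
  refine ⟨t', ht', ?_, ?_⟩
  · exact hsound2 t' (lt_of_lt_of_le h (min_le_left _ _))
  · intro t'' ht''
    have hpos : 0 < sInf (a '' Set.Icc t t') := lt_of_lt_of_le h (min_le_right _ _)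
    have hbdd : BddBelow (a '' Set.Icc t t') := ((Set.finite_Icc t t').image a).bddBelow
    have hle : sInf (a '' Set.Icc t t') ≤ a t'' := csInf_le hbdd ⟨t'', ht'', rfl⟩
    exact hsound1 t'' (lt_of_lt_of_le hpos hle)
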